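/- Determinization of Floyd automata preserves acceptance: a string y is accepted by the nondeterministic Floyd automaton A if and only if y is accepted by its powerset determinization Ã, where Ã has initial state (#, I × {⊥}) and final states {(#, K) | ∃ q ∈ F, (q, ⊥) ∈ K}. -/

import Mathlib

/-! # Preliminaries: precedence relations, Floyd automata, chains, supports,
operator (Floyd) grammars. -/

/-- The three operator precedence relations. -/
inductive PrecRel : Type
  | lt  -- ⋖ , yields precedence
  | eq  -- ≐ , equal in precedence
  | gt  -- ⋗ , takes precedence
deriving DecidableEq

/-- A (nondeterministic) Floyd automaton over a precedence alphabet `(T, M)`.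
`none` plays the role of the delimiter `#`. -/
structure FloydAutomaton (T : Type*) (Q : Type*) where
  /-- conflict-free operator precedence matrix over `T ∪ {#}` -/
  M : Option T → Option T → Option PrecRel
  /-- initial states -/
  init : Set Q
  /-- final states -/
  final : Set Q
  /-- push transition function -/
  push : Q → T → Set Q
  /-- flush transition function -/
  flush : Q → Q → Set Q

namespace FloydAutomaton

/-- A configuration: the bottom stack symbol `(#, base)` is represented by `base`,
the rest of the stack is a list (top = head) of triples (marked?, symbol, state),
and `input` is the remaining input (the trailing `#` is implicit). -/
structure Config (T : Type*) (Q : Type*) where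
  base : Q
  stack : List (Bool × T × Q)
  input : List T

variable {T Q : Type*}

/-- Symbol on top of the stack (`none` = `#`). -/
def Config.topSym (c : Config T Q) : Option T := c.stack.head?.map (fun s => s.2.1)

/-- State on top of the stack. -/
def Config.topState (c : Config T Q) : Q := ((c.stack.head?.map (fun s => s.2.2)).getD c.base)

/-- Number of marked symbols on the stack. -/
def Config.marked (c : Config T Q) : ℕ := c.stack.countP (fun s => s.1)

variable (A : FloydAutomaton T Q)

/-- One move of a Floyd automaton: push (top ≐ current), mark (top ⋖ current),
flush (top ⋗ current). -/
inductive Step : Config T Q → Config T Q → Prop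
  | push {b : Q} {st : List (Bool × T × Q)} {w : List T} {q : Q} (a : T) :
      A.M (Config.topSym ⟨b, st, a :: w⟩) (some a) = some PrecRel.eq →
      q ∈ A.push (Config.topState ⟨b, st, a :: w⟩) a →
      Step ⟨b, st, a :: w⟩ ⟨b, (false, a, q) :: st, w⟩
  | mark {b : Q} {st : List (Bool × T × Q)} {w : List T} {q : Q} (a : T) :
      A.M (Config.topSym ⟨b, st, a :: w⟩) (some a) = some PrecRel.lt →
      q ∈ A.push (Config.topState ⟨b, st, a :: w⟩) a →
      Step ⟨b, st, a :: w⟩ ⟨b, (true, a, q) :: st, w⟩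
  | flushMid {b : Q} {pre : List (Bool × T × Q)} {x : T} {qm : Q}
      {s : Bool × T × Q} {rest : List (Bool × T × Q)} {w : List T} {q : Q} :
      (∀ p ∈ pre, p.1 = false) →
      A.M (Config.topSym ⟨b, pre ++ (true, x, qm) :: s :: rest, w⟩) w.head? = some PrecRel.gt →
      q ∈ A.flush (Config.topState ⟨b, pre ++ (true, x, qm) :: s :: rest, w⟩) s.2.2 →
      Step ⟨b, pre ++ (true, x, qm) :: s :: rest, w⟩ ⟨b, (s.1, s.2.1, q) :: rest, w⟩
  | flushBot {b : Q} {pre : List (Bool × T × Q)} {x : T} {qm : Q} {w : List T} {q : Q} :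
      (∀ p ∈ pre, p.1 = false) →
      A.M (Config.topSym ⟨b, pre ++ [(true, x, qm)], w⟩) w.head? = some PrecRel.gt →
      q ∈ A.flush (Config.topState ⟨b, pre ++ [(true, x, qm)], w⟩) b →
      Step ⟨b, pre ++ [(true, x, qm)], w⟩ ⟨q, [], w⟩

/-- Acceptance of a finite word. -/
def Accepts (x : List T) : Prop :=
  ∃ qI ∈ A.init, ∃ qF ∈ A.final,
    Relation.ReflTransGen A.Step ⟨qI, [], x⟩ ⟨qF, [], []⟩

/-- The language recognized by a Floyd automaton. -/
def language : Set (List T) := { x | A.Accepts x }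

/-- A Floyd automaton is deterministic iff it has one initial state and all
transition functions yield at most one state. -/
def Deterministic : Prop :=
  (∃ q, A.init = {q}) ∧ (∀ q a, (A.push q a).Subsingleton) ∧
    (∀ q p, (A.flush q p).Subsingleton)

/-- States of the powerset determinization: a lookback symbol together with a set
of pairs of states (`none` in the second component is `⊥`). -/
abbrev DetState (T : Type*) (Q : Type*) := Option T × Set (Q × Option Q)

/-- Push transition of the determinization. -/
def detPushF (s : DetState T Q) (a : T) : DetState T Q :=
  (some a, { ht | ∃ q p, (q, p) ∈ s.2 ∧ ht.1 ∈ A.push q a ∧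
      ((A.M s.1 (some a) = some PrecRel.lt ∧ ht.2 = some q) ∨
       (A.M s.1 (some a) = some PrecRel.eq ∧ ht.2 = p)) })

/-- Flush transition of the determinization. -/
def detFlushF (s₁ s₂ : DetState T Q) : DetState T Q :=
  (s₂.1, { hp | ∃ r q, (r, some q) ∈ s₁.2 ∧ (q, hp.2) ∈ s₂.2 ∧ hp.1 ∈ A.flush r q })

/-- The powerset determinization of a Floyd automaton. -/
def det : FloydAutomaton T (DetState T Q) where
  M := A.M
  init := {(none, { p | p.2 = none ∧ p.1 ∈ A.init })}
  final := { s | s.1 = none ∧ ∃ q ∈ A.final, (q, none) ∈ s.2 }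
  push := fun s a => {A.detPushF s a}
  flush := fun s₁ s₂ => {A.detFlushF s₁ s₂}

end FloydAutomaton

section Chains

variable {T : Type*}

mutual
/-- `ChainB M a₀ y b` : the word `y` is the body of a (simple or composed) chain
`⌈a₀⌉ y ⌊b⌋` over the precedence alphabet `(T, M)`. -/
inductive ChainB (M : Option T → Option T → Option PrecRel) :
    Option T → List T → Option T → Prop
  | head0 {a₀ b : Option T} {a₁ : T} {y : List T} :
      M a₀ b ≠ none →
      M a₀ (some a₁) = some PrecRel.lt →
      ChainT M a₁ y b →
      ChainB M a₀ (a₁ :: y) b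
  | head {a₀ b : Option T} {a₁ : T} {x₀ y : List T} :
      M a₀ b ≠ none →
      M a₀ (some a₁) = some PrecRel.lt →
      ChainB M a₀ x₀ (some a₁) →
      ChainT M a₁ y b →
      ChainB M a₀ (x₀ ++ a₁ :: y) b

/-- Auxiliary: tail of a chain body, after a skeleton symbol `a`. -/
inductive ChainT (M : Option T → Option T → Option PrecRel) :
    T → List T → Option T → Prop
  | last0 {a : T} {b : Option T} :
      M (some a) b = some PrecRel.gt →
      ChainT M a [] b
  | last {a : T} {xn : List T} {b : Option T} :
      ChainB M (some a) xn b →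
      M (some a) b = some PrecRel.gt →
      ChainT M a xn b
  | cons0 {a a' : T} {y : List T} {b : Option T} :
      M (some a) (some a') = some PrecRel.eq →
      ChainT M a' y b →
      ChainT M a (a' :: y) b
  | cons {a a' : T} {x y : List T} {b : Option T} :
      M (some a) (some a') = some PrecRel.eq →
      ChainB M (some a) x (some a') →
      ChainT M a' y b →
      ChainT M a (x ++ a' :: y) b
end

/-- `SimpleBody M a₀ l b` : `l` is the body `a₁ … aₙ` of a simple chain
`⌈a₀⌉ a₁ … aₙ ⌊b⌋`, i.e. `a₀ ⋖ a₁ ≐ … ≐ aₙ ⋗ b` with `M a₀ b` defined. -/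
def SimpleBody (M : Option T → Option T → Option PrecRel)
    (a₀ : Option T) (l : List T) (b : Option T) : Prop :=
  (l ≠ []) ∧ M a₀ b ≠ none ∧
  (∀ h : l ≠ [], M a₀ (some (l.head h)) = some PrecRel.lt ∧
      M (some (l.getLast h)) b = some PrecRel.gt) ∧
  List.Chain' (fun x y => M (some x) (some y) = some PrecRel.eq) l

/-- `≐`-acyclicity of a precedence matrix. -/
def EqAcyclic (M : Option T → Option T → Option PrecRel) : Prop :=
  ∀ x : Option T, ¬ Relation.TransGen (fun u v => M u v = some PrecRel.eq) x x

variable {Q : Type*}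

mutual
/-- `Supp A q y q'` : the automaton `A` has a support labelled by the chain body `y`
leading from state `q` to state `q'`, ending with a flush labelled by the state
reached after the first filler. -/
inductive Supp (A : FloydAutomaton T Q) : Q → List T → Q → Prop
  | head0 {q₀ q₁ qf : Q} {a₁ : T} {y : List T} :
      q₁ ∈ A.push q₀ a₁ →
      SuppT A q₀ q₁ y qf →
      Supp A q₀ (a₁ :: y) qf
  | head {q₀ q₀' q₁ qf : Q} {a₁ : T} {x₀ y : List T} :
      Supp A q₀ x₀ q₀' →
      q₁ ∈ A.push q₀' a₁ →
      SuppT A q₀' q₁ y qf →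
      Supp A q₀ (x₀ ++ a₁ :: y) qf

/-- Auxiliary: the tail of a support; the first argument after `A` is the label
of the final flush. -/
inductive SuppT (A : FloydAutomaton T Q) : Q → Q → List T → Q → Prop
  | last0 {q₀' qn qf : Q} :
      qf ∈ A.flush qn q₀' →
      SuppT A q₀' qn [] qf
  | last {q₀' qn q' qf : Q} {xn : List T} :
      Supp A qn xn q' →
      qf ∈ A.flush q' q₀' →
      SuppT A q₀' qn xn qf
  | cons0 {q₀' qi q'' qf : Q} {a : T} {y : List T} :
      q'' ∈ A.push qi a →
      SuppT A q₀' q'' y qf →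
      SuppT A q₀' qi (a :: y) qf
  | cons {q₀' qi q' q'' qf : Q} {a : T} {x y : List T} :
      Supp A qi x q' →
      q'' ∈ A.push q' a →
      SuppT A q₀' q'' y qf →
      SuppT A q₀' qi (x ++ a :: y) qf
end

end Chains

section Grammar

variable {T : Type*}

open Symbol in
/-- A symbol is a nonterminal. -/
def IsNT {N : Type*} : Symbol T N → Prop
  | Symbol.nonterminal _ => True
  | Symbol.terminal _ => False

/-- A string over `Σ ∪ N` has no two adjacent nonterminals. -/
def NoAdjNT {N : Type*} (l : List (Symbol T N)) : Prop :=
  List.Chain' (fun x y => ¬(IsNT x ∧ IsNT y)) l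

/-- An operator grammar: no right-hand side contains two adjacent nonterminals. -/
def OperatorGrammar (g : ContextFreeGrammar T) : Prop :=
  ∀ r ∈ g.rules, NoAdjNT r.output

/-- The equal-in-precedence relation `a ≐ b` of a grammar. -/
def GEq (g : ContextFreeGrammar T) (a b : T) : Prop :=
  ∃ r ∈ g.rules, ∃ α mid β,
    r.output = α ++ Symbol.terminal a :: (mid ++ Symbol.terminal b :: β) ∧
    (mid = [] ∨ ∃ B, mid = [Symbol.nonterminal B])

/-- The left terminal set: `a ∈ 𝓛(A)` iff `A ⇒* B a α` with `B ∈ N ∪ {ε}`. -/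
def LTerm (g : ContextFreeGrammar T) (A : g.NT) (a : T) : Prop :=
  ∃ pre α, g.Derives [Symbol.nonterminal A] (pre ++ Symbol.terminal a :: α) ∧
    (pre = [] ∨ ∃ B, pre = [Symbol.nonterminal B])

/-- The right terminal set: `a ∈ 𝓡(A)` iff `A ⇒* α a B` with `B ∈ N ∪ {ε}`. -/
def RTerm (g : ContextFreeGrammar T) (A : g.NT) (a : T) : Prop :=
  ∃ α post, g.Derives [Symbol.nonterminal A] (α ++ Symbol.terminal a :: post) ∧
    (post = [] ∨ ∃ B, post = [Symbol.nonterminal B])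

/-- The yields-precedence relation `a ⋖ b` of a grammar. -/
def GLt (g : ContextFreeGrammar T) (a b : T) : Prop :=
  ∃ r ∈ g.rules, ∃ α β D,
    r.output = α ++ Symbol.terminal a :: Symbol.nonterminal D :: β ∧ LTerm g D b

/-- The takes-precedence relation `a ⋗ b` of a grammar. -/
def GGt (g : ContextFreeGrammar T) (a b : T) : Prop :=
  ∃ r ∈ g.rules, ∃ α β D,
    r.output = α ++ Symbol.nonterminal D :: Symbol.terminal b :: β ∧ RTerm g D a

/-- Conflict-freeness: for each pair of terminals at most one precedence relation holds. -/
def ConflictFree (g : ContextFreeGrammar T) : Prop :=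
  ∀ a b : T, ¬(GEq g a b ∧ GLt g a b) ∧ ¬(GEq g a b ∧ GGt g a b) ∧
    ¬(GLt g a b ∧ GGt g a b)

/-- A Floyd (operator precedence) grammar. -/
def FloydGrammar (g : ContextFreeGrammar T) : Prop :=
  OperatorGrammar g ∧ ConflictFree g

end Grammar

namespace DetPf

open FloydAutomaton

variable {T Q : Type*}

/-- top state of a stack over base `b`. -/
def ts {S : Type*} (b : S) (st : List (Bool × T × S)) : S :=
  (st.head?.map (fun s => s.2.2)).getD b

/-- top symbol of a stack. -/
def sym {S : Type*} (st : List (Bool × T × S)) : Option T :=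
  st.head?.map (fun s => s.2.1)

/-- skeleton of a stack entry. -/
def skel {S : Type*} (e : Bool × T × S) : Bool × T := (e.1, e.2.1)

/-- the anchor (state below the topmost mark) of a stack. -/
def aTop {S : Type*} (b : S) : List (Bool × T × S) → Option S
  | [] => none
  | (true, _, _) :: rest => some (ts b rest)
  | (false, _, _) :: rest => aTop b rest

@[simp] lemma topState_mk {S : Type*} (b : S) (st : List (Bool × T × S)) (w : List T) :
    Config.topState ⟨b, st, w⟩ = ts b st := rfl

@[simp] lemma topSym_mk {S : Type*} (b : S) (st : List (Bool × T × S)) (w : List T) :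
    Config.topSym ⟨b, st, w⟩ = sym st := rfl

@[simp] lemma ts_nil {S : Type*} (b : S) : ts (T := T) b [] = b := rfl
@[simp] lemma ts_cons {S : Type*} (b : S) (e : Bool × T × S) (st : List (Bool × T × S)) :
    ts b (e :: st) = e.2.2 := rfl
@[simp] lemma sym_nil {S : Type*} : sym (T := T) (S := S) [] = none := rfl
@[simp] lemma sym_cons {S : Type*} (e : Bool × T × S) (st : List (Bool × T × S)) :
    sym (e :: st) = some e.2.1 := rfl

lemma aTop_cons {S : Type*} (b : S) (e : Bool × T × S) (rest : List (Bool × T × S)) :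
    aTop b (e :: rest) = if e.1 then some (ts b rest) else aTop b rest := by
  obtain ⟨m, a, q⟩ := e; cases m <;> rfl

lemma aTop_congr {S : Type*} (b : S) {e e' : Bool × T × S} (h : e.1 = e'.1)
    (rest : List (Bool × T × S)) : aTop b (e :: rest) = aTop b (e' :: rest) := by
  rw [aTop_cons, aTop_cons, h]

/-- sym is determined by the skeleton. -/
lemma sym_of_skel {S S' : Type*} {st : List (Bool × T × S)} {st' : List (Bool × T × S')}
    (h : st.map skel = st'.map skel) : sym st = sym st' := by
  cases st with
  | nil => cases st' with
    | nil => rfl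
    | cons e' r' => simp at h
  | cons e r => cases st' with
    | nil => simp at h
    | cons e' r' =>
      simp only [List.map_cons, List.cons.injEq] at h
      simp [sym, skel] at h ⊢
      exact h.1.2

/-- unmarkedness transfers along skeleton equality. -/
lemma marks_of_skel {S S' : Type*} : ∀ {l : List (Bool × T × S)} {l' : List (Bool × T × S')},
    l.map skel = l'.map skel → (∀ p ∈ l', p.1 = false) → ∀ p ∈ l, p.1 = false := by
  intro l
  induction l with
  | nil => intro l' _ _ p hp; simp at hp
  | cons e r ih =>
    intro l' h hl' p hp
    cases l' with
    | nil => simp at h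
    | cons e' r' =>
      simp only [List.map_cons, List.cons.injEq] at h
      rcases List.mem_cons.mp hp with hp | hp
      · have he : e.1 = e'.1 := by
          have := h.1; simp [skel] at this; exact this.1
        rw [hp, he]; exact hl' e' List.mem_cons_self
      · exact ih h.2 (fun p hp => hl' p (List.mem_cons_of_mem _ hp)) p hp

/-- decomposition of a skeleton-equal list along `pre ++ x :: s :: rest`. -/
lemma map_decomp {S S' : Type*} :
    ∀ (pre : List (Bool × T × S)) (st' : List (Bool × T × S'))
      (x s : Bool × T × S) (rest : List (Bool × T × S)),
      st'.map skel = (pre ++ x :: s :: rest).map skel →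
      ∃ pre' x' s' rest', st' = pre' ++ x' :: s' :: rest' ∧
        pre'.map skel = pre.map skel ∧ skel x' = skel x ∧ skel s' = skel s ∧
        rest'.map skel = rest.map skel := by
  intro pre
  induction pre with
  | nil =>
    intro st' x s rest h
    cases st' with
    | nil => simp at h
    | cons x' st'' =>
      cases st'' with
      | nil => simp at h
      | cons s' rest' =>
        simp only [List.nil_append, List.map_cons, List.cons.injEq] at h
        exact ⟨[], x', s', rest', rfl, rfl, h.1, h.2.1, h.2.2⟩
  | cons e pre ih =>
    intro st' x s rest h
    cases st' with
    | nil => simp at h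
    | cons e' st'' =>
      simp only [List.cons_append, List.map_cons, List.cons.injEq] at h
      obtain ⟨pre', x', s', rest', h1, h2, h3, h4, h5⟩ := ih st'' x s rest h.2
      exact ⟨e' :: pre', x', s', rest', by simp [h1], by simp [h.1, h2], h3, h4, h5⟩

/-- decomposition along `pre ++ [x]`. -/
lemma map_decomp1 {S S' : Type*} :
    ∀ (pre : List (Bool × T × S)) (st' : List (Bool × T × S')) (x : Bool × T × S),
      st'.map skel = (pre ++ [x]).map skel →
      ∃ pre' x', st' = pre' ++ [x'] ∧ pre'.map skel = pre.map skel ∧ skel x' = skel x := by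
  intro pre
  induction pre with
  | nil =>
    intro st' x h
    cases st' with
    | nil => simp at h
    | cons x' st'' =>
      cases st'' with
      | nil =>
        simp only [List.nil_append, List.map_cons, List.map_nil, List.cons.injEq] at h
        exact ⟨[], x', rfl, rfl, h.1⟩
      | cons y r => simp at h
  | cons e pre ih =>
    intro st' x h
    cases st' with
    | nil => simp at h
    | cons e' st'' =>
      simp only [List.cons_append, List.map_cons, List.cons.injEq] at h
      obtain ⟨pre', x', h1, h2, h3⟩ := ih st'' x h.2
      exact ⟨e' :: pre', x', by simp [h1], by simp [h.1, h2], h3⟩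

lemma aTop_pre {S : Type*} (b : S) :
    ∀ (pre : List (Bool × T × S)), (∀ p ∈ pre, p.1 = false) →
      ∀ (x : T) (qm : S) (st₀ : List (Bool × T × S)),
      aTop b (pre ++ (true, x, qm) :: st₀) = some (ts b st₀) := by
  intro pre
  induction pre with
  | nil => intro _ x qm st₀; rfl
  | cons e r ih =>
    intro h x qm st₀
    obtain ⟨m, a, q⟩ := e
    have : m = false := h (m, a, q) List.mem_cons_self
    subst this
    exact ih (fun p hp => h p (by simp [hp])) x qm st₀

/-- pointwise matching of an A-stack with a det-stack. -/
def MS (b : Q) : List (Bool × T × Q) → List (Bool × T × DetState T Q) → Prop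
  | [], [] => True
  | e :: st, e' :: st' =>
      e'.1 = e.1 ∧ e'.2.1 = e.2.1 ∧ e'.2.2.1 = some e.2.1 ∧
      (e.2.2, aTop b (e :: st)) ∈ e'.2.2.2 ∧ MS b st st'
  | _, _ => False

lemma MS_skel {b : Q} : ∀ {st : List (Bool × T × Q)} {st' : List (Bool × T × DetState T Q)},
    MS b st st' → st.map skel = st'.map skel := by
  intro st
  induction st with
  | nil => intro st' h; cases st' with
    | nil => rfl
    | cons e' r' => exact absurd h (by simp [MS])
  | cons e r ih =>
    intro st' h
    cases st' with
    | nil => exact absurd h (by simp [MS])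
    | cons e' r' =>
      obtain ⟨h1, h2, _, _, h5⟩ := h
      simp only [List.map_cons, skel]
      rw [h1, h2, ih h5]

lemma MS_suffix {b : Q} : ∀ (l₁ : List (Bool × T × Q)) (l₁' : List (Bool × T × DetState T Q))
    {l₂ : List (Bool × T × Q)} {l₂' : List (Bool × T × DetState T Q)},
    l₁.length = l₁'.length → MS b (l₁ ++ l₂) (l₁' ++ l₂') → MS b l₂ l₂' := by
  intro l₁
  induction l₁ with
  | nil =>
    intro l₁' l₂ l₂' hl h
    cases l₁' with
    | nil => exact h
    | cons _ _ => simp at hl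
  | cons e r ih =>
    intro l₁' l₂ l₂' hl h
    cases l₁' with
    | nil => simp at hl
    | cons e' r' =>
      simp only [List.length_cons, Nat.add_right_cancel_iff] at hl
      exact ih r' hl h.2.2.2.2

lemma MS_top {b : Q} {σb : DetState T Q} :
    ∀ {st : List (Bool × T × Q)} {st' : List (Bool × T × DetState T Q)},
    MS b st st' → (b, none) ∈ σb.2 → (ts b st, aTop b st) ∈ (ts σb st').2 := by
  intro st st' h hb
  cases st with
  | nil => cases st' with
    | nil => exact hb
    | cons e' r' => exact absurd h (by simp [MS])
  | cons e r => cases st' with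
    | nil => exact absurd h (by simp [MS])
    | cons e' r' => exact h.2.2.2.1

lemma MS_top_fst {b : Q} {σb : DetState T Q} (hσ : σb.1 = none) :
    ∀ {st : List (Bool × T × Q)} {st' : List (Bool × T × DetState T Q)},
    MS b st st' → (ts σb st').1 = sym st := by
  intro st st' h
  cases st with
  | nil => cases st' with
    | nil => exact hσ
    | cons e' r' => exact absurd h (by simp [MS])
  | cons e r => cases st' with
    | nil => exact absurd h (by simp [MS])
    | cons e' r' => exact h.2.2.1

/-- full matching of configurations. -/
def Match (c : Config T Q) (c' : Config T (DetState T Q)) : Prop :=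
  c.input = c'.input ∧ c'.base.1 = none ∧ (c.base, none) ∈ c'.base.2 ∧
    MS c.base c.stack c'.stack

/-- first components of det states record symbols. -/
def SymOk (c' : Config T (DetState T Q)) : Prop :=
  c'.base.1 = none ∧ ∀ e ∈ c'.stack, e.2.2.1 = some e.2.1

lemma symOk_dts {σb : DetState T Q} {st' : List (Bool × T × DetState T Q)} {w : List T}
    (h : SymOk ⟨σb, st', w⟩) : (ts σb st').1 = sym st' := by
  cases st' with
  | nil => exact h.1
  | cons e' r' => exact h.2 e' List.mem_cons_self

/-- spine of states/anchors of an A-stack. -/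
def spQ (b : Q) : List (Bool × T × Q) → List (Q × Option Q)
  | [] => [(b, none)]
  | (true, _, q) :: rest => (q, some (ts b rest)) :: spQ b rest
  | (false, _, q) :: rest => (q, aTop b rest) :: (spQ b rest).tail

/-- spine of pair-sets of a det-stack. -/
def spK (σb : DetState T Q) : List (Bool × T × DetState T Q) → List (Set (Q × Option Q))
  | [] => [σb.2]
  | (true, _, K) :: rest => K.2 :: spK σb rest
  | (false, _, K) :: rest => K.2 :: (spK σb rest).tail

lemma spQ_head (b : Q) (st : List (Bool × T × Q)) :
    spQ b st = (ts b st, aTop b st) :: (spQ b st).tail := by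
  cases st with
  | nil => rfl
  | cons e rest => obtain ⟨m, a, q⟩ := e; cases m <;> rfl

lemma spK_head (σb : DetState T Q) (st : List (Bool × T × DetState T Q)) :
    spK σb st = (ts σb st).2 :: (spK σb st).tail := by
  cases st with
  | nil => rfl
  | cons e rest => obtain ⟨m, a, K⟩ := e; cases m <;> rfl

lemma spQ_tail_congr (b : Q) {e e' : Bool × T × Q} (h : e.1 = e'.1)
    (rest : List (Bool × T × Q)) : (spQ b (e :: rest)).tail = (spQ b (e' :: rest)).tail := by
  obtain ⟨m, a, q⟩ := e; obtain ⟨m', a', q'⟩ := e'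
  simp only at h; subst h
  cases m <;> rfl

lemma spK_tail_congr (σb : DetState T Q) {e e' : Bool × T × DetState T Q} (h : e.1 = e'.1)
    (rest : List (Bool × T × DetState T Q)) :
    (spK σb (e :: rest)).tail = (spK σb (e' :: rest)).tail := by
  obtain ⟨m, a, q⟩ := e; obtain ⟨m', a', q'⟩ := e'
  simp only at h; subst h
  cases m <;> rfl

lemma spQ_pre (b : Q) : ∀ (pre : List (Bool × T × Q)), (∀ p ∈ pre, p.1 = false) →
    ∀ (st₀ : List (Bool × T × Q)),
    spQ b (pre ++ st₀) = (ts b (pre ++ st₀), aTop b (pre ++ st₀)) :: (spQ b st₀).tail := by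
  intro pre
  induction pre with
  | nil => intro _ st₀; exact spQ_head b st₀
  | cons e r ih =>
    intro h st₀
    obtain ⟨m, a, q⟩ := e
    have hm : m = false := h (m, a, q) List.mem_cons_self
    subst hm
    have h2 := ih (fun p hp => h p (List.mem_cons_of_mem _ hp)) st₀
    calc spQ b (((false, a, q) :: r) ++ st₀)
        = (q, aTop b (r ++ st₀)) :: (spQ b (r ++ st₀)).tail := rfl
      _ = (q, aTop b (r ++ st₀)) :: (spQ b st₀).tail := by rw [h2]; rfl
      _ = _ := rfl

lemma spK_pre (σb : DetState T Q) : ∀ (pre : List (Bool × T × DetState T Q)),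
    (∀ p ∈ pre, p.1 = false) → ∀ (st₀ : List (Bool × T × DetState T Q)),
    spK σb (pre ++ st₀) = (ts σb (pre ++ st₀)).2 :: (spK σb st₀).tail := by
  intro pre
  induction pre with
  | nil => intro _ st₀; exact spK_head σb st₀
  | cons e r ih =>
    intro h st₀
    obtain ⟨m, a, K⟩ := e
    have hm : m = false := h (m, a, K) List.mem_cons_self
    subst hm
    have h2 := ih (fun p hp => h p (List.mem_cons_of_mem _ hp)) st₀
    calc spK σb (((false, a, K) :: r) ++ st₀)
        = K.2 :: (spK σb (r ++ st₀)).tail := rfl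
      _ = K.2 :: (spK σb st₀).tail := by rw [h2]; rfl
      _ = _ := rfl

/-- linked spine assignments. -/
inductive Lk : List (Q × Option Q) → Prop
  | single (q : Q) : Lk [(q, none)]
  | cons (q q' : Q) (p : Option Q) (L : List (Q × Option Q)) :
      Lk ((q', p) :: L) → Lk ((q, some q') :: (q', p) :: L)

lemma Lk_replace_head {q q' : Q} {p : Option Q} {L : List (Q × Option Q)}
    (h : Lk ((q, p) :: L)) : Lk ((q', p) :: L) := by
  cases h with
  | single => exact Lk.single q'
  | cons _ q'' p' L' h' => exact Lk.cons q' q'' p' L' h'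

lemma fwd_step (A : FloydAutomaton T Q) {c d : Config T Q} {c' : Config T (DetState T Q)}
    (hm : Match c c') (hstep : A.Step c d) :
    ∃ d', (A.det).Step c' d' ∧ Match d d' := by
  obtain ⟨σb, st', inp⟩ := c'
  cases hstep with
  | @push b st w q a hM hq =>
    obtain ⟨hin, hb1, hb2, hms⟩ := hm
    simp only [Config.input] at hin  -- hin : a :: w = inp
    subst hin
    have hsk := MS_skel hms
    have hsym : sym st = sym st' := sym_of_skel hsk
    refine ⟨⟨σb, (false, a, A.detPushF (ts σb st') a) :: st', w⟩, ?_, ?_, hb1, hb2, ?_⟩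
    · refine FloydAutomaton.Step.push a ?_ ?_
      · show A.M (sym st') (some a) = some PrecRel.eq
        rw [← hsym]; exact hM
      · exact rfl
    · rfl
    · refine ⟨rfl, rfl, rfl, ?_, hms⟩
      show (q, aTop b st) ∈ (A.detPushF (ts σb st') a).2
      refine ⟨ts b st, aTop b st, MS_top hms hb2, hq, Or.inr ⟨?_, rfl⟩⟩
      rw [MS_top_fst hb1 hms]
      exact hM
  | @mark b st w q a hM hq =>
    obtain ⟨hin, hb1, hb2, hms⟩ := hm
    simp only [Config.input] at hin
    subst hin
    have hsk := MS_skel hms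
    have hsym : sym st = sym st' := sym_of_skel hsk
    refine ⟨⟨σb, (true, a, A.detPushF (ts σb st') a) :: st', w⟩, ?_, ?_, hb1, hb2, ?_⟩
    · refine FloydAutomaton.Step.mark a ?_ ?_
      · show A.M (sym st') (some a) = some PrecRel.lt
        rw [← hsym]; exact hM
      · exact rfl
    · rfl
    · refine ⟨rfl, rfl, rfl, ?_, hms⟩
      show (q, some (ts b st)) ∈ (A.detPushF (ts σb st') a).2
      refine ⟨ts b st, aTop b st, MS_top hms hb2, hq, Or.inl ⟨?_, rfl⟩⟩
      rw [MS_top_fst hb1 hms]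
      exact hM
  | @flushMid b pre x qm s rest w q hpre hM hq =>
    obtain ⟨hin, hb1, hb2, hms⟩ := hm
    simp only [Config.input] at hin
    subst hin
    simp only [Config.base, Config.stack] at hb1 hb2 hms
    simp only [topSym_mk, topState_mk] at hM hq
    have hsk : (pre ++ (true, x, qm) :: s :: rest).map skel = st'.map skel := MS_skel hms
    obtain ⟨pre', x', s', rest', rfl, hpm, hxm, hsm, hrm⟩ :=
      map_decomp pre st' (true, x, qm) s rest hsk.symm
    obtain ⟨mx, ax, Km⟩ := x'
    obtain ⟨ms, as, σs⟩ := s'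
    simp only [skel, Prod.mk.injEq] at hxm hsm
    obtain ⟨hmx, hax⟩ := hxm
    subst hmx
    subst hax
    have hlen : pre.length = pre'.length := by
      have := congrArg List.length hpm; simpa using this.symm
    have hms2 := MS_suffix pre pre' hlen hms
    have hpre' : ∀ p ∈ pre', p.1 = false := marks_of_skel hpm hpre
    have hanchor : aTop b (pre ++ (true, ax, qm) :: s :: rest) = some (ts b (s :: rest)) :=
      aTop_pre b pre hpre ax qm (s :: rest)
    refine ⟨⟨σb, (ms, as, A.detFlushF (ts σb (pre' ++ (true, ax, Km) :: (ms, as, σs) :: rest'))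
        σs) :: rest', w⟩, ?_, ?_, hb1, hb2, ?_⟩
    · refine FloydAutomaton.Step.flushMid hpre' ?_ ?_
      · show A.M (sym (pre' ++ (true, ax, Km) :: (ms, as, σs) :: rest')) w.head? = some PrecRel.gt
        rw [← sym_of_skel hsk]
        exact hM
      · exact rfl
    · rfl
    · refine ⟨hsm.1, hsm.2, ?_, ?_, hms2.2.2.2.2.2.2.2.2⟩
      · show σs.1 = some s.2.1
        exact hms2.2.2.2.2.2.2.1
      · show (q, aTop b ((s.1, s.2.1, q) :: rest)) ∈ _
        refine ⟨ts b (pre ++ (true, ax, qm) :: s :: rest), s.2.2, ?_, ?_, hq⟩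
        · have := MS_top (σb := σb) hms hb2
          rwa [hanchor] at this
        · have hc : aTop b ((s.1, s.2.1, q) :: rest) = aTop b (s :: rest) :=
            aTop_congr (e := (s.1, s.2.1, q)) (e' := s) b rfl rest
          rw [hc]
          exact hms2.2.2.2.2.2.2.2.1
  | @flushBot b pre x qm w q hpre hM hq =>
    obtain ⟨hin, hb1, hb2, hms⟩ := hm
    simp only [Config.input] at hin
    subst hin
    simp only [Config.base, Config.stack] at hb1 hb2 hms
    simp only [topSym_mk, topState_mk] at hM hq
    have hsk : (pre ++ [(true, x, qm)]).map skel = st'.map skel := MS_skel hms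
    obtain ⟨pre', x', rfl, hpm, hxm⟩ := map_decomp1 pre st' (true, x, qm) hsk.symm
    obtain ⟨mx, ax, Km⟩ := x'
    simp only [skel, Prod.mk.injEq] at hxm
    obtain ⟨hmx, hax⟩ := hxm
    subst hmx
    subst hax
    have hpre' : ∀ p ∈ pre', p.1 = false := marks_of_skel hpm hpre
    have hanchor : aTop b (pre ++ [(true, ax, qm)]) = some b := by
      have := aTop_pre b pre hpre ax qm []
      simpa using this
    refine ⟨⟨A.detFlushF (ts σb (pre' ++ [(true, ax, Km)])) σb, [], w⟩, ?_, ?_, hb1, ?_, trivial⟩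
    · refine FloydAutomaton.Step.flushBot hpre' ?_ ?_
      · show A.M (sym (pre' ++ [(true, ax, Km)])) w.head? = some PrecRel.gt
        rw [← sym_of_skel hsk]
        exact hM
      · exact rfl
    · rfl
    · show (q, none) ∈ _
      refine ⟨ts b (pre ++ [(true, ax, qm)]), b, ?_, hb2, hq⟩
      have := MS_top (σb := σb) hms hb2
      rwa [hanchor] at this

lemma fwd_run (A : FloydAutomaton T Q) {c d : Config T Q} {c' : Config T (DetState T Q)}
    (hm : Match c c') (h : Relation.ReflTransGen A.Step c d) :
    ∃ d', Relation.ReflTransGen (A.det).Step c' d' ∧ Match d d' := by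
  induction h with
  | refl => exact ⟨c', Relation.ReflTransGen.refl, hm⟩
  | tail _ hstep ih =>
    obtain ⟨e', hr, hm'⟩ := ih
    obtain ⟨d', hs, hm''⟩ := fwd_step A hm' hstep
    exact ⟨d', hr.tail hs, hm''⟩

lemma symOk_step (A : FloydAutomaton T Q) {c' d' : Config T (DetState T Q)}
    (h : SymOk c') (hs : (A.det).Step c' d') : SymOk d' := by
  cases hs with
  | @push b st w q a hM hq =>
    have hq' : q = A.detPushF (ts b st) a := Set.eq_of_mem_singleton hq
    refine ⟨h.1, fun e he => ?_⟩
    rcases List.mem_cons.mp he with rfl | he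
    · rw [hq']; rfl
    · exact h.2 e he
  | @mark b st w q a hM hq =>
    have hq' : q = A.detPushF (ts b st) a := Set.eq_of_mem_singleton hq
    refine ⟨h.1, fun e he => ?_⟩
    rcases List.mem_cons.mp he with rfl | he
    · rw [hq']; rfl
    · exact h.2 e he
  | @flushMid b pre x qm s rest w q hpre hM hq =>
    have hq' : q = A.detFlushF (ts b (pre ++ (true, x, qm) :: s :: rest)) s.2.2 :=
      Set.eq_of_mem_singleton hq
    refine ⟨h.1, fun e he => ?_⟩
    rcases List.mem_cons.mp he with rfl | he
    · show q.1 = some s.2.1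
      rw [hq']
      exact h.2 s (by simp)
    · exact h.2 e (by simp [he])
  | @flushBot b pre x qm w q hpre hM hq =>
    have hq' : q = A.detFlushF (ts b (pre ++ [(true, x, qm)])) b :=
      Set.eq_of_mem_singleton hq
    refine ⟨?_, fun e he => absurd he (List.not_mem_nil (a := e))⟩
    show q.1 = none
    rw [hq']
    exact h.1

lemma symOk_run (A : FloydAutomaton T Q) {c' d' : Config T (DetState T Q)}
    (h : SymOk c') (hs : Relation.ReflTransGen (A.det).Step c' d') : SymOk d' := by
  induction hs with
  | refl => exact h
  | tail _ hstep ih => exact symOk_step A ih hstep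

lemma bwd (A : FloydAutomaton T Q) (y : List T) {c' : Config T (DetState T Q)}
    (hrun : Relation.ReflTransGen (A.det).Step
      ⟨(none, {p : Q × Option Q | p.2 = none ∧ p.1 ∈ A.init}), [], y⟩ c') :
    ∀ L, Lk L → List.Forall₂ (fun x s => x ∈ s) L (spK c'.base c'.stack) →
    ∃ qI ∈ A.init, ∃ c : Config T Q,
      Relation.ReflTransGen A.Step ⟨qI, [], y⟩ c ∧ c.input = c'.input ∧
      c.stack.map skel = c'.stack.map skel ∧ spQ c.base c.stack = L := by
  induction hrun with
  | refl =>
    intro L hLk hF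
    dsimp only at hF
    rw [show spK ((none : Option T), {p : Q × Option Q | p.2 = none ∧ p.1 ∈ A.init})
      ([] : List (Bool × T × DetState T Q)) =
      [{p : Q × Option Q | p.2 = none ∧ p.1 ∈ A.init}] from rfl] at hF
    cases hF with
    | @cons a _ l₂ _ hmem hF' =>
      cases hF'
      obtain ⟨q, p⟩ := a
      obtain ⟨hp, hq⟩ := hmem
      refine ⟨q, hq, ⟨q, [], y⟩, Relation.ReflTransGen.refl, rfl, rfl, ?_⟩
      simp only at hp
      simp [spQ, hp]
  | @tail c'₁ c'₂ hpre hstep ih =>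
    intro L hLk hF
    have hsym : SymOk c'₁ := symOk_run A ⟨rfl, fun e he => absurd he (List.not_mem_nil (a := e))⟩ hpre
    cases hstep with
    | @push σb st' w K' a hM hK =>
      have hK' : K' = A.detPushF (ts σb st') a := Set.eq_of_mem_singleton hK
      subst hK'
      dsimp only at hF
      rw [show spK σb ((false, a, A.detPushF (ts σb st') a) :: st') =
        (A.detPushF (ts σb st') a).2 :: (spK σb st').tail from rfl] at hF
      cases hF with
      | @cons e _ Ltl _ hmem hFtl =>
        obtain ⟨q, t⟩ := e
        obtain ⟨q₀, p, hq₀, hpush, hdisj⟩ := hmem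
        simp only [topSym_mk] at hM
        have hM' : A.M (sym st') (some a) = some PrecRel.eq := hM
        rcases hdisj with ⟨hlt, _⟩ | ⟨_, ht⟩
        · rw [symOk_dts hsym] at hlt
          rw [hM'] at hlt
          simp at hlt
        · simp only at ht
          subst ht
          have hF₁ : List.Forall₂ (fun x s => x ∈ s) ((q₀, t) :: Ltl) (spK σb st') := by
            rw [spK_head]
            exact List.Forall₂.cons hq₀ hFtl
          obtain ⟨qI, hqI, c₁, hrun₁, hin₁, hsk₁, hsp₁⟩ :=
            ih ((q₀, t) :: Ltl) (Lk_replace_head hLk) hF₁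
          obtain ⟨b, st, inp⟩ := c₁
          dsimp only at hin₁ hsk₁ hsp₁
          subst hin₁
          have hh := spQ_head b st
          rw [hsp₁] at hh
          simp only [List.cons.injEq, Prod.mk.injEq] at hh
          have hts : ts b st = q₀ := hh.1.1.symm
          have hat : aTop b st = t := hh.1.2.symm
          refine ⟨qI, hqI, ⟨b, (false, a, q) :: st, w⟩, hrun₁.tail ?_, rfl, ?_, ?_⟩
          · refine FloydAutomaton.Step.push a ?_ ?_
            · show A.M (sym st) (some a) = some PrecRel.eq
              rw [sym_of_skel hsk₁]
              exact hM'
            · show q ∈ A.push (ts b st) a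
              rw [hts]
              exact hpush
          · simpa [skel] using hsk₁
          · show (q, aTop b st) :: (spQ b st).tail = (q, t) :: Ltl
            rw [hat, hsp₁]
            rfl
    | @mark σb st' w K' a hM hK =>
      have hK' : K' = A.detPushF (ts σb st') a := Set.eq_of_mem_singleton hK
      subst hK'
      dsimp only at hF
      rw [show spK σb ((true, a, A.detPushF (ts σb st') a) :: st') =
        (A.detPushF (ts σb st') a).2 :: spK σb st' from rfl] at hF
      cases hF with
      | @cons e _ Ltl _ hmem hFtl =>
        obtain ⟨q, t⟩ := e
        obtain ⟨q₀, p, hq₀, hpush, hdisj⟩ := hmem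
        simp only [topSym_mk] at hM
        have hM' : A.M (sym st') (some a) = some PrecRel.lt := hM
        rcases hdisj with ⟨_, ht⟩ | ⟨heq, _⟩
        · simp only at ht
          subst ht
          cases hLk with
          | cons _ q' p' L' hLk' =>
            obtain ⟨qI, hqI, c₁, hrun₁, hin₁, hsk₁, hsp₁⟩ := ih _ hLk' hFtl
            obtain ⟨b, st, inp⟩ := c₁
            dsimp only at hin₁ hsk₁ hsp₁
            subst hin₁
            have hh := spQ_head b st
            rw [hsp₁] at hh
            simp only [List.cons.injEq, Prod.mk.injEq] at hh
            have hts : ts b st = q₀ := hh.1.1.symm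
            refine ⟨qI, hqI, ⟨b, (true, a, q) :: st, w⟩, hrun₁.tail ?_, rfl, ?_, ?_⟩
            · refine FloydAutomaton.Step.mark a ?_ ?_
              · show A.M (sym st) (some a) = some PrecRel.lt
                rw [sym_of_skel hsk₁]
                exact hM'
              · show q ∈ A.push (ts b st) a
                rw [hts]
                exact hpush
            · simpa [skel] using hsk₁
            · show (q, some (ts b st)) :: spQ b st = (q, some q₀) :: (q₀, p') :: L'
              rw [hts, hsp₁]
        · rw [symOk_dts hsym] at heq
          rw [hM'] at heq
          simp at heq
    | @flushMid σb pre' x Km' s' rest' w K'' hpre' hM hK =>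
      have hK' : K'' = A.detFlushF (ts σb (pre' ++ (true, x, Km') :: s' :: rest')) s'.2.2 :=
        Set.eq_of_mem_singleton hK
      subst hK'
      dsimp only at hF
      rw [spK_head] at hF
      cases hF with
      | @cons e _ Ltl _ hmem hFtl =>
        obtain ⟨h, p⟩ := e
        have hmem' : ∃ r qq, (r, some qq) ∈ (ts σb (pre' ++ (true, x, Km') :: s' :: rest')).2 ∧
            (qq, p) ∈ s'.2.2.2 ∧ h ∈ A.flush r qq := hmem
        obtain ⟨r, qt, hr, hqt, hfl⟩ := hmem'
        rw [spK_tail_congr σb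
          (show ((s'.1, s'.2.1,
            A.detFlushF (ts σb (pre' ++ (true, x, Km') :: s' :: rest')) s'.2.2) :
              Bool × T × DetState T Q).1 = s'.1 from rfl) rest'] at hFtl
        have hF₁ : List.Forall₂ (fun x s => x ∈ s) ((r, some qt) :: (qt, p) :: Ltl)
            (spK σb (pre' ++ (true, x, Km') :: s' :: rest')) := by
          rw [spK_pre σb pre' hpre' ((true, x, Km') :: s' :: rest')]
          rw [show (spK σb ((true, x, Km') :: s' :: rest')).tail = spK σb (s' :: rest') from rfl]
          rw [spK_head σb (s' :: rest')]
          exact List.Forall₂.cons hr (List.Forall₂.cons hqt hFtl)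
        have hLk₁ : Lk ((r, some qt) :: (qt, p) :: Ltl) :=
          Lk.cons r qt p Ltl (Lk_replace_head hLk)
        obtain ⟨qI, hqI, c₁, hrun₁, hin₁, hsk₁, hsp₁⟩ := ih _ hLk₁ hF₁
        obtain ⟨b, stQ, inp⟩ := c₁
        dsimp only at hin₁ hsk₁ hsp₁
        subst hin₁
        obtain ⟨preQ, xQ, sQ, restQ, rfl, hpm, hxm, hsm, hrm⟩ :=
          map_decomp pre' stQ (true, x, Km') s' rest' hsk₁
        obtain ⟨mxQ, axQ, qm⟩ := xQ
        simp only [skel, Prod.mk.injEq] at hxm hsm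
        obtain ⟨hmx, hax⟩ := hxm
        subst hmx
        have hpreQ : ∀ p ∈ preQ, p.1 = false := marks_of_skel hpm hpre'
        have hanchor : aTop b (preQ ++ (true, axQ, qm) :: sQ :: restQ) =
            some (ts b (sQ :: restQ)) := aTop_pre b preQ hpreQ axQ qm (sQ :: restQ)
        rw [spQ_pre b preQ hpreQ ((true, axQ, qm) :: sQ :: restQ)] at hsp₁
        rw [show (spQ b ((true, axQ, qm) :: sQ :: restQ)).tail = spQ b (sQ :: restQ)
          from rfl] at hsp₁
        simp only [List.cons.injEq, Prod.mk.injEq] at hsp₁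
        obtain ⟨⟨hts, hato⟩, hrest⟩ := hsp₁
        rw [hanchor] at hato
        have hsQ : sQ.2.2 = qt := by
          have : ts b (sQ :: restQ) = qt := Option.some_injective _ hato
          exact this
        have hpat : aTop b (sQ :: restQ) = p := by
          have hh := spQ_head b (sQ :: restQ)
          rw [hrest] at hh
          simp only [List.cons.injEq, Prod.mk.injEq] at hh
          exact hh.1.2.symm
        have htail : (spQ b (sQ :: restQ)).tail = Ltl := by rw [hrest]; rfl
        refine ⟨qI, hqI, ⟨b, (sQ.1, sQ.2.1, h) :: restQ, inp⟩, hrun₁.tail ?_, rfl, ?_, ?_⟩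
        · refine FloydAutomaton.Step.flushMid hpreQ ?_ ?_
          · show A.M (sym (preQ ++ (true, axQ, qm) :: sQ :: restQ)) inp.head? = some PrecRel.gt
            rw [sym_of_skel hsk₁]
            exact hM
          · show h ∈ A.flush (ts b (preQ ++ (true, axQ, qm) :: sQ :: restQ)) sQ.2.2
            rw [hts, hsQ]
            exact hfl
        · simp only [List.map_cons, List.cons.injEq]
          exact ⟨by simp [skel, hsm.1, hsm.2], hrm⟩
        · show spQ b ((sQ.1, sQ.2.1, h) :: restQ) = (h, p) :: Ltl
          rw [spQ_head]
          rw [show ts b ((sQ.1, sQ.2.1, h) :: restQ) = h from rfl]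
          rw [aTop_congr (e := (sQ.1, sQ.2.1, h)) (e' := sQ) b rfl restQ, hpat]
          rw [spQ_tail_congr b (e := (sQ.1, sQ.2.1, h)) (e' := sQ) rfl restQ, htail]
    | @flushBot σb pre' x Km' w K'' hpre' hM hK =>
      have hK' : K'' = A.detFlushF (ts σb (pre' ++ [(true, x, Km')])) σb :=
        Set.eq_of_mem_singleton hK
      subst hK'
      dsimp only at hF
      rw [show spK (A.detFlushF (ts σb (pre' ++ [(true, x, Km')])) σb)
        ([] : List (Bool × T × DetState T Q)) =
        [(A.detFlushF (ts σb (pre' ++ [(true, x, Km')])) σb).2] from rfl] at hF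
      cases hF with
      | @cons e _ Ltl _ hmem hFtl =>
        cases hFtl
        obtain ⟨h, p⟩ := e
        have hmem' : ∃ r qq, (r, some qq) ∈ (ts σb (pre' ++ [(true, x, Km')])).2 ∧
            (qq, p) ∈ σb.2 ∧ h ∈ A.flush r qq := hmem
        obtain ⟨r, qt, hr, hqt, hfl⟩ := hmem'
        have hp : p = none := by cases hLk; rfl
        subst hp
        have hF₁ : List.Forall₂ (fun x s => x ∈ s) [(r, some qt), (qt, none)]
            (spK σb (pre' ++ [(true, x, Km')])) := by
          rw [spK_pre σb pre' hpre' [(true, x, Km')]]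
          rw [show (spK σb [(true, x, Km')]).tail = [σb.2] from rfl]
          exact List.Forall₂.cons hr (List.Forall₂.cons hqt List.Forall₂.nil)
        have hLk₁ : Lk [(r, some qt), (qt, none)] := Lk.cons r qt none [] (Lk.single qt)
        obtain ⟨qI, hqI, c₁, hrun₁, hin₁, hsk₁, hsp₁⟩ := ih _ hLk₁ hF₁
        obtain ⟨b, stQ, inp⟩ := c₁
        dsimp only at hin₁ hsk₁ hsp₁
        subst hin₁
        obtain ⟨preQ, xQ, rfl, hpm, hxm⟩ := map_decomp1 pre' stQ (true, x, Km') hsk₁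
        obtain ⟨mxQ, axQ, qm⟩ := xQ
        simp only [skel, Prod.mk.injEq] at hxm
        obtain ⟨hmx, hax⟩ := hxm
        subst hmx
        have hpreQ : ∀ p ∈ preQ, p.1 = false := marks_of_skel hpm hpre'
        have hanchor : aTop b (preQ ++ [(true, axQ, qm)]) = some b := by
          have := aTop_pre b preQ hpreQ axQ qm []
          simpa using this
        rw [spQ_pre b preQ hpreQ [(true, axQ, qm)]] at hsp₁
        rw [show (spQ b [(true, axQ, qm)]).tail = [(b, (none : Option Q))] from rfl] at hsp₁
        simp only [List.cons.injEq, Prod.mk.injEq] at hsp₁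
        obtain ⟨⟨hts, hato⟩, hb, -⟩ := hsp₁
        rw [hanchor] at hato
        have hbq : b = qt := Option.some_injective _ hato
        refine ⟨qI, hqI, ⟨h, [], inp⟩, hrun₁.tail ?_, rfl, rfl, rfl⟩
        refine FloydAutomaton.Step.flushBot hpreQ ?_ ?_
        · show A.M (sym (preQ ++ [(true, axQ, qm)])) inp.head? = some PrecRel.gt
          rw [sym_of_skel hsk₁]
          exact hM
        · show h ∈ A.flush (ts b (preQ ++ [(true, axQ, qm)])) b
          rw [hts, hbq]
          exact hfl

end DetPf

/-- determinization preserves acceptance: a string is accepted by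
`A` iff it is accepted by its powerset determinization `A.det` (whose initial
state is `(#, I × {⊥})` and whose final states are the `(#, K)` with some
`(q, ⊥) ∈ K`, `q ∈ F`). -/
theorem det_preserves_acceptance {T Q : Type*} (A : FloydAutomaton T Q)
    (y : List T) : A.Accepts y ↔ A.det.Accepts y := by
  constructor
  · rintro ⟨qI, hqI, qF, hqF, hrun⟩
    have hm : DetPf.Match (⟨qI, [], y⟩ : FloydAutomaton.Config T Q)
        (⟨((none : Option T), {p : Q × Option Q | p.2 = none ∧ p.1 ∈ A.init}), [], y⟩ :
          FloydAutomaton.Config T (FloydAutomaton.DetState T Q)) :=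
      ⟨rfl, rfl, ⟨rfl, hqI⟩, trivial⟩
    obtain ⟨d', hr, hm'⟩ := DetPf.fwd_run A hm hrun
    obtain ⟨σf, stf, inpf⟩ := d'
    obtain ⟨hin, hb1, hb2, hms⟩ := hm'
    dsimp only at hin hb1 hb2 hms
    have hstf : stf = [] := by
      cases stf with
      | nil => rfl
      | cons e r => exact absurd hms (by simp [DetPf.MS])
    subst hstf
    have hinpf : inpf = [] := hin.symm
    subst hinpf
    exact ⟨_, rfl, σf, ⟨hb1, qF, hqF, hb2⟩, hr⟩
  · rintro ⟨qI', hqI', qF', hqF', hrun⟩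
    have hqI'' : qI' = ((none : Option T), {p : Q × Option Q | p.2 = none ∧ p.1 ∈ A.init}) :=
      Set.eq_of_mem_singleton hqI'
    subst hqI''
    obtain ⟨hf1, qF, hqF, hmem⟩ := hqF'
    have hF : List.Forall₂ (fun x s => x ∈ s) [(qF, (none : Option Q))]
        (DetPf.spK qF' ([] : List (Bool × T × FloydAutomaton.DetState T Q))) :=
      List.Forall₂.cons hmem List.Forall₂.nil
    obtain ⟨qI, hqI, c, hrunA, hin, hsk, hsp⟩ :=
      DetPf.bwd A y (c' := ⟨qF', [], []⟩) hrun [(qF, none)] (DetPf.Lk.single qF) hF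
    obtain ⟨b, st, inp⟩ := c
    dsimp only at hin hsk hsp
    have hst : st = [] := by
      cases st with
      | nil => rfl
      | cons e r => simp at hsk
    subst hst
    subst hin
    have hb : b = qF := by
      have h2 : ((b, (none : Option Q)) :: ([] : List (Q × Option Q))) = [(qF, none)] := hsp
      simp only [List.cons.injEq, Prod.mk.injEq] at h2
      exact h2.1.1
    exact ⟨qI, hqI, qF, hqF, hb ▸ hrunA⟩
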